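/- Let A be an n×n real Hurwitz matrix (every eigenvalue of its complexification has strictly negative real part), and let W and W′ be symmetric n×n real matrices such that A W + W Aᵀ + I_n = 0 and −(A W′ + W′ Aᵀ + I_n) is positive semidefinite. Then W′ − W is positive semidefinite. -/

import Mathlib

open Matrix

/-- A real square matrix is Hurwitz if every eigenvalue of its complexification
has strictly negative real part. -/
def Matrix.IsHurwitz {n : ℕ} (A : Matrix (Fin n) (Fin n) ℝ) : Prop :=
  ∀ μ ∈ spectrum ℂ (A.map (Complex.ofReal)), μ.re < 0

section LyapunovAux

open NormedSpace Filter
open scoped Topology ENNReal NNReal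

attribute [local instance] Matrix.linftyOpNormedRing Matrix.linftyOpNormedAlgebra

variable {n : ℕ}

private lemma map_ofReal_exp (M : Matrix (Fin n) (Fin n) ℝ) :
    (exp M).map Complex.ofReal = exp (M.map Complex.ofReal) := by
  set φ : Matrix (Fin n) (Fin n) ℝ →ₐ[ℝ] Matrix (Fin n) (Fin n) ℂ :=
    (Complex.ofRealAm.mapMatrix : Matrix (Fin n) (Fin n) ℝ →ₐ[ℝ] Matrix (Fin n) (Fin n) ℂ)
  have hφ : Continuous φ := LinearMap.continuous_of_finiteDimensional φ.toLinearMap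
  have h := map_exp φ hφ M
  have h2 : φ M = M.map Complex.ofReal := rfl
  have h3 : φ (exp M) = (exp M).map Complex.ofReal := rfl
  exact h3.symm.trans (h.trans (congrArg exp h2))

private lemma exp_mulVec_eigenvector (M : Matrix (Fin n) (Fin n) ℂ) {v : Fin n → ℂ} {μ : ℂ}
    (hv : M *ᵥ v = μ • v) : exp M *ᵥ v = Complex.exp μ • v := by
  classical
  have hpow : ∀ k : ℕ, (M ^ k) *ᵥ v = μ ^ k • v := by
    intro k
    induction k with
    | zero => simp
    | succ k ih =>
        rw [pow_succ', pow_succ', ← Matrix.mulVec_mulVec, ih, Matrix.mulVec_smul, hv,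
          smul_smul, mul_comm μ]
  let L : Matrix (Fin n) (Fin n) ℂ →ₗ[ℂ] (Fin n → ℂ) :=
    { toFun := fun N => N *ᵥ v
      map_add' := fun N₁ N₂ => Matrix.add_mulVec N₁ N₂ v
      map_smul' := fun c N => Matrix.smul_mulVec c N v }
  let Lc : Matrix (Fin n) (Fin n) ℂ →L[ℂ] (Fin n → ℂ) := LinearMap.toContinuousLinearMap L
  have hLc : ∀ N, Lc N = N *ᵥ v := fun _ => rfl
  have hsum : Summable fun k : ℕ => ((k.factorial : ℂ)⁻¹) • M ^ k := expSeries_summable' M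
  have h1 : exp M *ᵥ v = ∑' k : ℕ, ((k.factorial : ℂ)⁻¹) • (M ^ k *ᵥ v) := by
    rw [← hLc, exp_eq_tsum ℂ, Lc.map_tsum hsum]
    simp [hLc, L, Lc, Matrix.smul_mulVec]
  rw [h1]
  have h2 : ∀ k : ℕ, ((k.factorial : ℂ)⁻¹) • (M ^ k *ᵥ v) = (((k.factorial : ℂ)⁻¹) * μ ^ k) • v := by
    intro k; rw [hpow k, smul_smul]
  simp_rw [h2]
  rw [Summable.tsum_smul_const]
  · congr 1
    have := congrFun Complex.exp_eq_exp_ℂ μ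
    rw [this, exp_eq_tsum ℂ]
    simp [smul_eq_mul]
  · have : Summable fun k : ℕ => ((k.factorial : ℂ)⁻¹) • μ ^ k := expSeries_summable' μ
    simpa [smul_eq_mul] using this

private lemma mem_spectrum_iff_eigen (M : Matrix (Fin n) (Fin n) ℂ) (μ : ℂ) :
    μ ∈ spectrum ℂ M ↔ ∃ v, v ≠ 0 ∧ M *ᵥ v = μ • v := by
  classical
  rw [spectrum.mem_iff, Matrix.isUnit_iff_isUnit_det, isUnit_iff_ne_zero, not_not,
    ← Matrix.exists_mulVec_eq_zero_iff]
  constructor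
  · rintro ⟨v, hv, hMv⟩
    refine ⟨v, hv, ?_⟩
    have : (algebraMap ℂ (Matrix (Fin n) (Fin n) ℂ)) μ *ᵥ v - M *ᵥ v = 0 := by
      rw [← Matrix.sub_mulVec]; exact hMv
    have h2 : (algebraMap ℂ (Matrix (Fin n) (Fin n) ℂ)) μ *ᵥ v = μ • v := by
      ext i
      simp [Matrix.algebraMap_eq_diagonal, Matrix.mulVec_diagonal]
    rw [h2] at this
    exact (sub_eq_zero.mp this).symm
  · rintro ⟨v, hv, hMv⟩
    refine ⟨v, hv, ?_⟩
    have h2 : (algebraMap ℂ (Matrix (Fin n) (Fin n) ℂ)) μ *ᵥ v = μ • v := by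
      ext i
      simp [Matrix.algebraMap_eq_diagonal, Matrix.mulVec_diagonal]
    rw [Matrix.sub_mulVec, h2, hMv, sub_self]

set_option maxHeartbeats 1000000 in
private lemma spectrum_exp_subset (M : Matrix (Fin n) (Fin n) ℂ) {μ : ℂ}
    (hμ : μ ∈ spectrum ℂ (exp M)) : ∃ l ∈ spectrum ℂ M, μ = Complex.exp l := by
  classical
  obtain ⟨v, hv, hMv⟩ := (mem_spectrum_iff_eigen _ μ).mp hμ
  set f := Matrix.mulVecLin (exp M) with hf
  set g := Matrix.mulVecLin M with hg
  set E : Submodule ℂ (Fin n → ℂ) := LinearMap.ker (f - μ • LinearMap.id) with hE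
  have memE : ∀ w, w ∈ E ↔ exp M *ᵥ w = μ • w := by
    intro w
    simp only [hE, LinearMap.mem_ker, LinearMap.sub_apply, LinearMap.smul_apply,
      LinearMap.id_apply, hf, Matrix.mulVecLin_apply, sub_eq_zero]
  have hvE : v ∈ E := (memE v).mpr hMv
  have hcomm : exp M * M = M * exp M := ((Commute.refl M).exp_left)
  have hinv : ∀ w ∈ E, g w ∈ E := by
    intro w hw
    rw [memE] at hw ⊢
    rw [hg, Matrix.mulVecLin_apply, Matrix.mulVec_mulVec, hcomm, ← Matrix.mulVec_mulVec,
      hw, Matrix.mulVec_smul]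
  have : Nontrivial E := nontrivial_of_ne ⟨v, hvE⟩ 0 (by simp [hv])
  obtain ⟨l, hl⟩ := Module.End.exists_eigenvalue (g.restrict hinv)
  obtain ⟨w, hw⟩ := hl.exists_hasEigenvector
  have hu0 : (w : Fin n → ℂ) ≠ 0 := by
    simpa [Submodule.coe_eq_zero] using hw.right
  have hMu : M *ᵥ (w : Fin n → ℂ) = l • (w : Fin n → ℂ) := by
    have := congrArg (Subtype.val) hw.apply_eq_smul
    simpa [LinearMap.restrict_apply, hg] using this
  refine ⟨l, (mem_spectrum_iff_eigen _ l).mpr ⟨w, hu0, hMu⟩, ?_⟩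
  have h1 : exp M *ᵥ (w : Fin n → ℂ) = Complex.exp l • (w : Fin n → ℂ) :=
    exp_mulVec_eigenvector M hMu
  have h2 : exp M *ᵥ (w : Fin n → ℂ) = μ • (w : Fin n → ℂ) := (memE _).mp w.2
  have := h1.symm.trans h2
  have := sub_eq_zero.mpr this
  rw [← sub_smul] at this
  rcases smul_eq_zero.mp this with h | h
  · exact (sub_eq_zero.mp h).symm ▸ rfl
  · exact absurd h hu0

private lemma nnnorm_map_ofReal (M : Matrix (Fin n) (Fin n) ℝ) :
    ‖M.map Complex.ofReal‖₊ = ‖M‖₊ := by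
  rw [Matrix.linfty_opNNNorm_def, Matrix.linfty_opNNNorm_def]
  congr 1
  ext i
  simp [Matrix.map_apply]

private lemma pow_tendsto_zero_of_hurwitz (hn : n ≠ 0) (A : Matrix (Fin n) (Fin n) ℝ)
    (hA : A.IsHurwitz) :
    Tendsto (fun k : ℕ => exp A ^ k) atTop (𝓝 0) := by
  classical
  have : NeZero n := ⟨hn⟩
  set Ac := A.map Complex.ofReal with hAc
  set Bc := exp Ac with hBc
  have hlt : ∀ z ∈ spectrum ℂ Bc, ‖z‖₊ < 1 := by
    intro z hz
    obtain ⟨l, hl, rfl⟩ := spectrum_exp_subset Ac hz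
    have hre : l.re < 0 := hA l hl
    rw [← NNReal.coe_lt_coe, coe_nnnorm, NNReal.coe_one, Complex.norm_exp]
    exact Real.exp_lt_one_iff.mpr hre
  have hne : (spectrum ℂ Bc).Nonempty := spectrum.nonempty Bc
  obtain ⟨k₀, hk₀mem, hk₀⟩ := spectrum.exists_nnnorm_eq_spectralRadius_of_nonempty hne
  have hrad : spectralRadius ℂ Bc < 1 := by
    rw [← hk₀]
    exact_mod_cast hlt k₀ hk₀mem
  obtain ⟨c, hc1, hc2⟩ := ENNReal.lt_iff_exists_nnreal_btwn.mp hrad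
  have hgel := spectrum.pow_nnnorm_pow_one_div_tendsto_nhds_spectralRadius Bc
  have hev : ∀ᶠ N : ℕ in atTop, ((‖Bc ^ N‖₊ : ℝ≥0∞)) ^ (1 / (N:ℝ)) < (c : ℝ≥0∞) :=
    hgel.eventually_lt_const hc1
  have hc2' : (c : ℝ) < 1 := by exact_mod_cast hc2
  have hbound : ∀ᶠ N : ℕ in atTop, ‖exp A ^ N‖ ≤ (c : ℝ) ^ N := by
    filter_upwards [hev, eventually_ge_atTop 1] with N hN hN1
    have hNne : (N : ℝ) ≠ 0 := by positivity
    have h1 : ((‖Bc ^ N‖₊ : ℝ≥0∞)) ≤ (c : ℝ≥0∞) ^ (N : ℕ) := by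
      have := ENNReal.rpow_le_rpow hN.le (by positivity : (0:ℝ) ≤ (N:ℝ))
      rw [← ENNReal.rpow_mul, one_div, inv_mul_cancel₀ hNne, ENNReal.rpow_one] at this
      rwa [← ENNReal.rpow_natCast (c : ℝ≥0∞) N]
    have h2 : ‖Bc ^ N‖₊ ≤ c ^ N := by exact_mod_cast h1
    have h3 : ‖exp A ^ N‖₊ = ‖Bc ^ N‖₊ := by
      rw [hBc, ← map_ofReal_exp, ← nnnorm_map_ofReal (exp A ^ N)]
      congr 1
      have := map_pow (Complex.ofRealHom.mapMatrix) (exp A) N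
      exact this
    calc ‖exp A ^ N‖ = (‖Bc ^ N‖₊ : ℝ) := by rw [← h3]; rfl
      _ ≤ ((c ^ N : ℝ≥0) : ℝ) := by exact_mod_cast h2
      _ = (c : ℝ) ^ N := by push_cast; ring
  apply tendsto_zero_iff_norm_tendsto_zero.mpr
  apply squeeze_zero' (Eventually.of_forall fun N => norm_nonneg _) hbound
  exact tendsto_pow_atTop_nhds_zero_of_lt_one (by positivity) hc2'

/-- quadratic form CLM -/
private noncomputable def quadCLM (x : Fin n → ℝ) : Matrix (Fin n) (Fin n) ℝ →L[ℝ] ℝ :=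
  LinearMap.toContinuousLinearMap
    { toFun := fun M => x ⬝ᵥ (M *ᵥ x)
      map_add' := fun M N => by simp [Matrix.add_mulVec, dotProduct_add]
      map_smul' := fun c M => by simp [Matrix.smul_mulVec, dotProduct_smul] }

private lemma quadCLM_apply (x : Fin n → ℝ) (M : Matrix (Fin n) (Fin n) ℝ) :
    quadCLM x M = x ⬝ᵥ (M *ᵥ x) := rfl

/-- transpose CLM -/
private noncomputable def transCLM : Matrix (Fin n) (Fin n) ℝ →L[ℝ] Matrix (Fin n) (Fin n) ℝ :=
  LinearMap.toContinuousLinearMap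
    { toFun := fun M => Mᵀ
      map_add' := fun M N => Matrix.transpose_add M N
      map_smul' := fun c M => Matrix.transpose_smul c M }

private lemma transCLM_apply (M : Matrix (Fin n) (Fin n) ℝ) :
    (transCLM M : Matrix (Fin n) (Fin n) ℝ) = Mᵀ := rfl

private lemma conj_dotProduct (M N : Matrix (Fin n) (Fin n) ℝ) (x : Fin n → ℝ) :
    x ⬝ᵥ ((M * N * Mᵀ) *ᵥ x) = (Mᵀ *ᵥ x) ⬝ᵥ (N *ᵥ (Mᵀ *ᵥ x)) := by
  rw [← Matrix.mulVec_mulVec, ← Matrix.mulVec_mulVec, Matrix.dotProduct_mulVec,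
    ← Matrix.mulVec_transpose]

private lemma quad_antitone (A D Q : Matrix (Fin n) (Fin n) ℝ) (hQ : Q.PosSemidef)
    (hD : A * D + D * Aᵀ = -Q) (x : Fin n → ℝ) :
    Antitone (fun t : ℝ => x ⬝ᵥ ((exp (t • A) * D * (exp (t • A))ᵀ) *ᵥ x)) := by
  set g : ℝ → ℝ := fun t => x ⬝ᵥ ((exp (t • A) * D * (exp (t • A))ᵀ) *ᵥ x) with hg
  have hder : ∀ t : ℝ, HasDerivAt g
      (-((exp (t • A))ᵀ *ᵥ x) ⬝ᵥ (Q *ᵥ ((exp (t • A))ᵀ *ᵥ x))) t := by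
    intro t
    have hE : HasDerivAt (fun u : ℝ => exp (u • A)) (exp (t • A) * A) t :=
      hasDerivAt_exp_smul_const A t
    have h1 : HasDerivAt (fun u : ℝ => exp (u • A) * D) (exp (t • A) * A * D) t :=
      hE.mul_const D
    have h2 : HasDerivAt (fun u : ℝ => (exp (u • A))ᵀ) ((exp (t • A) * A)ᵀ) t := by
      have := (transCLM.hasFDerivAt (x := exp (t • A))).comp_hasDerivAt t hE
      exact this
    have h3 : HasDerivAt (fun u : ℝ => exp (u • A) * D * (exp (u • A))ᵀ)
        (exp (t • A) * A * D * (exp (t • A))ᵀ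
          + exp (t • A) * D * (exp (t • A) * A)ᵀ) t := h1.mul h2
    have h4 := (quadCLM x).hasFDerivAt.comp_hasDerivAt t h3
    have h5 : exp (t • A) * A * D * (exp (t • A))ᵀ
          + exp (t • A) * D * (exp (t • A) * A)ᵀ
        = exp (t • A) * (-Q) * (exp (t • A))ᵀ := by
      rw [← hD]
      rw [Matrix.transpose_mul]
      noncomm_ring
    rw [h5] at h4
    have h6 : quadCLM x (exp (t • A) * (-Q) * (exp (t • A))ᵀ)
        = -((exp (t • A))ᵀ *ᵥ x) ⬝ᵥ (Q *ᵥ ((exp (t • A))ᵀ *ᵥ x)) := by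
      rw [quadCLM_apply, conj_dotProduct]
      simp [Matrix.neg_mulVec, dotProduct_neg]
    exact h4.congr_deriv h6
  apply antitone_of_deriv_nonpos
  · exact fun t => (hder t).differentiableAt
  · intro t
    rw [(hder t).deriv]
    have := hQ.dotProduct_mulVec_nonneg ((exp (t • A))ᵀ *ᵥ x)
    simp only [star_trivial] at this
    simpa using this

end LyapunovAux

section Main

open NormedSpace Filter
open scoped Topology

attribute [local instance] Matrix.linftyOpNormedRing Matrix.linftyOpNormedAlgebra

/-- Comparison of Lyapunov equation solutions: for Hurwitz `A`, if
`A W + W Aᵀ + I = 0` and `A W′ + W′ Aᵀ + I ⪯ 0`, then `W ⪯ W′`. -/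
theorem lyapunov_solution_comparison {n : ℕ}
    (A W W' : Matrix (Fin n) (Fin n) ℝ)
    (hA : A.IsHurwitz) (hW : W.IsSymm) (hW' : W'.IsSymm)
    (hWeq : A * W + W * Aᵀ + 1 = 0)
    (hW'ineq : (-(A * W' + W' * Aᵀ + 1)).PosSemidef) :
    (W' - W).PosSemidef := by
  classical
  set D := W' - W with hDdef
  set Q := -(A * W' + W' * Aᵀ + 1) with hQdef
  have hQpsd : Q.PosSemidef := hW'ineq
  have h1 : A * W + W * Aᵀ = -1 := eq_neg_of_add_eq_zero_left hWeq
  have hDeq : A * D + D * Aᵀ = -Q := by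
    rw [hDdef, hQdef, mul_sub, sub_mul, neg_neg, sub_add_sub_comm, h1, sub_neg_eq_add]
  refine Matrix.posSemidef_iff_dotProduct_mulVec.mpr ⟨?_, ?_⟩
  · show (W' - W)ᴴ = W' - W
    have : (W' - W)ᵀ = W' - W := by rw [Matrix.transpose_sub, hW', hW]
    simpa using this
  · intro x
    simp only [star_trivial]
    rcases Nat.eq_zero_or_pos n with hn | hn
    · subst hn
      simp [dotProduct]
    have hmono := quad_antitone A D Q hQpsd hDeq x
    have hzero : x ⬝ᵥ ((exp ((0:ℝ) • A) * D * (exp ((0:ℝ) • A))ᵀ) *ᵥ x)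
        = x ⬝ᵥ (D *ᵥ x) := by
      simp [exp_zero]
    have hk : ∀ k : ℕ, x ⬝ᵥ ((exp A ^ k * D * (exp A ^ k)ᵀ) *ᵥ x) ≤ x ⬝ᵥ (D *ᵥ x) := by
      intro k
      have hsmul : (k : ℝ) • A = (k : ℕ) • A := Nat.cast_smul_eq_nsmul ℝ k A
      have hexpk : exp ((k : ℝ) • A) = exp A ^ k := by
        rw [hsmul, Matrix.exp_nsmul]
      have h := hmono (by positivity : (0:ℝ) ≤ (k:ℝ))
      simp only [hexpk] at h
      exact le_trans h (le_of_eq hzero)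
    have hp := pow_tendsto_zero_of_hurwitz (Nat.pos_iff_ne_zero.mp hn) A hA
    have ht : Tendsto (fun k : ℕ => (exp A ^ k)ᵀ) atTop (𝓝 0) := by
      have h0 := (transCLM.continuous.tendsto 0).comp hp
      rw [map_zero] at h0
      exact h0
    have h2 : Tendsto (fun k : ℕ => exp A ^ k * D * (exp A ^ k)ᵀ) atTop (𝓝 0) := by
      have := (hp.mul_const D).mul ht
      simpa using this
    have htend : Tendsto (fun k : ℕ => x ⬝ᵥ ((exp A ^ k * D * (exp A ^ k)ᵀ) *ᵥ x))
        atTop (𝓝 0) := by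
      have h0 := ((quadCLM x).continuous.tendsto 0).comp h2
      rw [map_zero] at h0
      exact h0
    exact le_of_tendsto htend (Eventually.of_forall hk)

end Main
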